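/- For every n ≥ 2 there exist matrices A, S, B ∈ M_n(ℂ) with A upper triangular, Tr(A) a nonnegative real number, S Hermitian diagonal with real entries satisfying Re(A) ≤ S, and B strictly upper triangular with ‖B‖ ≤ 1, such that for every real r with n/(3n−2) < r < 1 one has Tr(A) + ∑_{m=1}^∞ |Tr(A B*)| r^m > Tr(S). (Explicit witnesses: A has 1 on the diagonal and −2 in every entry strictly above the diagonal, S = 2·I_n, and B is the shift with 1 on the superdiagonal and 0 elsewhere; then Tr(A B*) = −2(n−1).) -/

import Mathlib

open Matrix
open scoped Matrix.Norms.L2Operator ComplexOrder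

lemma sum_succ_ite {M : Type*} [AddCommMonoid M] {n : ℕ} (i : Fin n) (f : Fin n → M) :
    ∑ j : Fin n, (if (i : ℕ) + 1 = (j : ℕ) then f j else 0) =
      if h : (i : ℕ) + 1 < n then f ⟨(i : ℕ) + 1, h⟩ else 0 := by
  split_ifs with h
  · rw [Finset.sum_eq_single (⟨(i : ℕ) + 1, h⟩ : Fin n)]
    · simp
    · intro b _ hb
      rw [if_neg]
      intro he
      exact hb (Fin.ext he.symm)
    · simp
  · apply Finset.sum_eq_zero
    intro j _
    rw [if_neg]
    intro he
    exact h (he ▸ j.isLt)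

set_option maxHeartbeats 1000000 in
lemma shift_norm_le (m : ℕ) (B : Matrix (Fin (m+1)) (Fin (m+1)) ℂ)
    (hB : ∀ i j, B i j = if (i : ℕ) + 1 = (j : ℕ) then (1 : ℂ) else 0) :
    ‖B‖ ≤ 1 := by
  rw [Matrix.l2_opNorm_def]
  apply ContinuousLinearMap.opNorm_le_bound _ zero_le_one
  intro x
  rw [one_mul]
  have hmv : ∀ i : Fin (m+1),
      (Matrix.toEuclideanLin.trans LinearMap.toContinuousLinearMap B) x i =
      if h : (i : ℕ) + 1 < m + 1 then x ⟨(i : ℕ) + 1, h⟩ else 0 := by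
    intro i
    have : (Matrix.toEuclideanLin.trans LinearMap.toContinuousLinearMap B) x i
        = B.mulVec x i := rfl
    rw [this, Matrix.mulVec, dotProduct]
    rw [← sum_succ_ite i (fun j => x j)]
    congr 1; ext j
    simp [hB]
  rw [EuclideanSpace.norm_eq, EuclideanSpace.norm_eq]
  apply Real.sqrt_le_sqrt
  have : ∀ i : Fin (m+1),
      ‖(Matrix.toEuclideanLin.trans LinearMap.toContinuousLinearMap B) x i‖ ^ 2 =
      if h : (i : ℕ) + 1 < m + 1 then ‖x ⟨(i : ℕ) + 1, h⟩‖ ^ 2 else 0 := by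
    intro i
    rw [hmv i]
    split_ifs <;> simp
  rw [Finset.sum_congr rfl fun i _ => this i]
  rw [Fin.sum_univ_castSucc, Fin.sum_univ_succ (fun j : Fin (m+1) => ‖x j‖ ^ 2)]
  have h1 : (if h : ((Fin.last m : Fin (m+1)) : ℕ) + 1 < m + 1
      then ‖x ⟨((Fin.last m : Fin (m+1)) : ℕ) + 1, h⟩‖ ^ 2 else 0) = 0 := by
    rw [dif_neg]; simp
  rw [h1, add_zero]
  have h2 : ∀ i : Fin m,
      (if h : ((i.castSucc : Fin (m+1)) : ℕ) + 1 < m + 1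
        then ‖x ⟨((i.castSucc : Fin (m+1)) : ℕ) + 1, h⟩‖ ^ 2 else 0) = ‖x i.succ‖ ^ 2 := by
    intro i
    rw [dif_pos (by simp)]
    congr 1
  rw [Finset.sum_congr rfl fun i _ => h2 i]
  have : (0:ℝ) ≤ ‖x 0‖ ^ 2 := by positivity
  linarith

/-- The optimal bound for `r` in Bohr's inequality on `n × n` upper triangular
matrices is at most `n / (3n - 2)`. -/
theorem bohr_matrix_optimality_general (n : ℕ) (hn : 2 ≤ n) :
    ∃ A S B : Matrix (Fin n) (Fin n) ℂ,
      (∀ i j : Fin n, j < i → A i j = 0) ∧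
      0 ≤ A.trace ∧
      S.IsHermitian ∧
      (∀ i j : Fin n, i ≠ j → S i j = 0) ∧
      (∀ i : Fin n, (S i i).im = 0) ∧
      (S - (2 : ℂ)⁻¹ • (A + Aᴴ)).PosSemidef ∧
      (∀ i j : Fin n, j ≤ i → B i j = 0) ∧
      ‖B‖ ≤ 1 ∧
      ∀ r : ℝ, (n : ℝ) / (3 * n - 2) < r → r < 1 →
        A.trace.re + ∑' m : ℕ, ‖(A * Bᴴ).trace‖ * r ^ (m + 1) >
          S.trace.re := by
  obtain ⟨m, rfl⟩ : ∃ m, n = m + 1 := ⟨n - 1, by omega⟩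
  have hm : 1 ≤ m := by omega
  set A : Matrix (Fin (m+1)) (Fin (m+1)) ℂ :=
    Matrix.of fun i j => if i = j then (1 : ℂ) else if i < j then -2 else 0 with hA
  set S : Matrix (Fin (m+1)) (Fin (m+1)) ℂ :=
    Matrix.of fun i j => if i = j then (2 : ℂ) else 0 with hS
  set B : Matrix (Fin (m+1)) (Fin (m+1)) ℂ :=
    Matrix.of fun i j => if (i : ℕ) + 1 = (j : ℕ) then (1 : ℂ) else 0 with hB
  have htrA : A.trace = ((m : ℂ) + 1) := by
    simp [Matrix.trace, Matrix.diag, hA]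
  have htrS : S.trace = 2 * ((m : ℂ) + 1) := by
    simp [Matrix.trace, Matrix.diag, hS]
    ring
  refine ⟨A, S, B, ?_, ?_, ?_, ?_, ?_, ?_, ?_, ?_, ?_⟩
  · intro i j hji
    simp [hA, hji.ne', lt_asymm hji]
  · rw [htrA]
    have : ((m : ℂ) + 1) = ((m + 1 : ℝ) : ℂ) := by push_cast; ring
    rw [this]
    rw [Complex.zero_le_real]
    positivity
  · unfold Matrix.IsHermitian
    ext i j
    by_cases h : i = j
    · subst h; simp [hS]
    · simp [hS, h, Ne.symm h, Matrix.conjTranspose_apply]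
  · intro i j h
    simp [hS, h]
  · intro i
    simp [hS]
  · have key : S - (2 : ℂ)⁻¹ • (A + Aᴴ) =
        (Matrix.of fun i j : Fin (m+1) => if i = 0 then (1 : ℂ) else 0)ᴴ *
        (Matrix.of fun i j : Fin (m+1) => if i = 0 then (1 : ℂ) else 0) := by
      ext i j
      have hrhs : ((Matrix.of fun i j : Fin (m+1) => if i = 0 then (1 : ℂ) else 0)ᴴ *
          (Matrix.of fun i j : Fin (m+1) => if i = 0 then (1 : ℂ) else 0)) i j = 1 := by
        simp [Matrix.mul_apply, Matrix.conjTranspose_apply, apply_ite,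
          Finset.sum_ite_eq']
      rw [hrhs]
      rcases lt_trichotomy i j with h | h | h
      · simp [Matrix.sub_apply, Matrix.smul_apply, Matrix.add_apply,
          Matrix.conjTranspose_apply, hA, hS, h.ne, h.ne', h, lt_asymm h]
      · subst h
        simp [Matrix.sub_apply, Matrix.smul_apply, Matrix.add_apply,
          Matrix.conjTranspose_apply, hA, hS]
        ring
      · simp [Matrix.sub_apply, Matrix.smul_apply, Matrix.add_apply,
          Matrix.conjTranspose_apply, hA, hS, h.ne, h.ne', h, lt_asymm h]
    rw [key]
    exact Matrix.posSemidef_conjTranspose_mul_self _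
  · intro i j hji
    have : ¬ ((i : ℕ) + 1 = (j : ℕ)) := by
      have := (Fin.le_def.mp hji : (j : ℕ) ≤ (i : ℕ))
      omega
    simp [hB, this]
  · exact shift_norm_le m B (fun i j => by simp [hB])
  · intro r hr1 hr2
    -- compute the trace of A * Bᴴ
    have htr : (A * Bᴴ).trace = -2 * (m : ℂ) := by
      have hterm : ∀ i : Fin (m+1), (A * Bᴴ) i i =
          if h : (i : ℕ) + 1 < m + 1 then (-2 : ℂ) else 0 := by
        intro i
        rw [Matrix.mul_apply]
        have : ∀ k : Fin (m+1), A i k * Bᴴ k i =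
            if (i : ℕ) + 1 = (k : ℕ) then A i k else 0 := by
          intro k
          simp only [Matrix.conjTranspose_apply, hB, Matrix.of_apply]
          split_ifs <;> simp
        rw [Finset.sum_congr rfl fun k _ => this k]
        rw [sum_succ_ite i (fun k => A i k)]
        split_ifs with h
        · have hne : i ≠ (⟨(i : ℕ) + 1, h⟩ : Fin (m+1)) := by
            intro he
            have := congrArg Fin.val he
            simp at this
          have hlt : i < (⟨(i : ℕ) + 1, h⟩ : Fin (m+1)) := by
            rw [Fin.lt_def]; simp
          simp [hA, hne, hlt]
        · rfl
      simp only [Matrix.trace, Matrix.diag]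
      rw [Finset.sum_congr rfl fun i _ => hterm i]
      rw [Fin.sum_univ_castSucc]
      have hlast : (if h : ((Fin.last m : Fin (m+1)) : ℕ) + 1 < m + 1 then (-2 : ℂ) else 0)
          = 0 := by rw [dif_neg]; simp
      rw [hlast, add_zero]
      have : ∀ i : Fin m,
          (if h : ((i.castSucc : Fin (m+1)) : ℕ) + 1 < m + 1 then (-2 : ℂ) else 0) = -2 := by
        intro i; rw [dif_pos (by simp)]
      rw [Finset.sum_congr rfl fun i _ => this i]
      simp [mul_comm]
    have habs : ‖(A * Bᴴ).trace‖ = 2 * m := by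
      rw [htr]
      simp
    -- positivity facts about r
    have hm1 : (0 : ℝ) < 3 * ((m : ℝ) + 1) - 2 := by
      have : (1 : ℝ) ≤ (m : ℝ) := by exact_mod_cast hm
      linarith
    have hrpos : 0 < r := by
      refine lt_of_le_of_lt ?_ hr1
      push_cast
      positivity
    have h1r : 0 < 1 - r := by linarith
    -- the geometric series
    have hsum : ∑' k : ℕ, ‖(A * Bᴴ).trace‖ * r ^ (k + 1)
        = 2 * m * r / (1 - r) := by
      rw [habs]
      have : ∀ k : ℕ, 2 * (m : ℝ) * r ^ (k + 1) = (2 * m * r) * r ^ k := by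
        intro k; ring
      rw [tsum_congr this, tsum_mul_left, tsum_geometric_of_lt_one hrpos.le hr2]
      field_simp
    rw [hsum, htrA, htrS]
    have hreA : ((m : ℂ) + 1).re = (m : ℝ) + 1 := by simp
    have hreS : (2 * ((m : ℂ) + 1)).re = 2 * ((m : ℝ) + 1) := by simp
    rw [hreA, hreS]
    -- from the hypothesis on r
    have hkey : ((m : ℝ) + 1) < r * (3 * ((m : ℝ) + 1) - 2) := by
      have hr1' := hr1
      push_cast at hr1'
      rw [div_lt_iff₀ hm1] at hr1'
      linarith
    rw [gt_iff_lt, ← sub_lt_iff_lt_add']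
    have h2 : 2 * ((m:ℝ) + 1) - ((m:ℝ) + 1) = (m:ℝ) + 1 := by ring
    rw [h2, lt_div_iff₀ h1r]
    nlinarith
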